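/- Let k ≥ 0 and V = { x ∈ ℝ^{6+2k} : x2 ≠ 0 }. There exists a homeomorphism h : V → V such that the image under h of each set L¹_{c1,c2} := { x ∈ V : x2 = c2, x1·e^{−x4/x2} = c1 } (with (c1,c2) ∈ ℝ × (ℝ∖{0})) is a set of the form L²_{c1',c2'} := { x ∈ V : x2 = c2', x1² − 2·x2·x4 = c1' } for some (c1',c2') ∈ ℝ × (ℝ∖{0}), and every set L²_{c1',c2'} is the image of some L¹_{c1,c2}. In other words, the two foliations of V whose leaves are the families {L¹_{c1,c2}} and {L²_{c1,c2}} (the maximal-dimensional coadjoint orbit foliations of G_{6+2k,1} and G_{6+2k,2}) are topologically equivalent. -/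

import Mathlib

namespace Stmt18Aux

lemma v1 (k : ℕ) : ((1 : Fin (2*k+6)) : ℕ) = 1 := by
  simp only [OfNat.ofNat, Fin.instOfNat, Fin.ofNat, Nat.mod_eq_of_lt]; rfl

lemma v3 (k : ℕ) : ((3 : Fin (2*k+6)) : ℕ) = 3 := by
  simp only [OfNat.ofNat, Fin.instOfNat, Fin.ofNat, Nat.mod_eq_of_lt]; rfl

lemma ne10 (k : ℕ) : (1 : Fin (2*k+6)) ≠ 0 :=
  Fin.ne_of_val_ne (by rw [v1, Fin.val_zero]; omega)

lemma ne13 (k : ℕ) : (1 : Fin (2*k+6)) ≠ 3 :=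
  Fin.ne_of_val_ne (by rw [v1, v3]; omega)

lemma ne30 (k : ℕ) : (3 : Fin (2*k+6)) ≠ 0 :=
  Fin.ne_of_val_ne (by rw [v3, Fin.val_zero]; omega)

/-- Forward map on coordinates. -/
noncomputable def F (k : ℕ) (x : Fin (2*k+6) → ℝ) : Fin (2*k+6) → ℝ :=
  fun i => if i = 0 then x 3
    else if i = 3 then ((x 3)^2 - x 0 * Real.exp (-(x 3) / x 1)) / (2 * x 1)
    else x i

/-- Inverse map on coordinates. -/
noncomputable def G (k : ℕ) (y : Fin (2*k+6) → ℝ) : Fin (2*k+6) → ℝ :=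
  fun i => if i = 0 then ((y 0)^2 - 2 * y 1 * y 3) * Real.exp (y 0 / y 1)
    else if i = 3 then y 0 else y i

variable {k : ℕ}

lemma F_zero (x : Fin (2*k+6) → ℝ) : F k x 0 = x 3 := by simp [F]

lemma F_one (x : Fin (2*k+6) → ℝ) : F k x 1 = x 1 := by
  simp [F, ne10 k, ne13 k]

lemma F_three (x : Fin (2*k+6) → ℝ) :
    F k x 3 = ((x 3)^2 - x 0 * Real.exp (-(x 3) / x 1)) / (2 * x 1) := by
  simp [F, ne30 k]

lemma G_zero (y : Fin (2*k+6) → ℝ) :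
    G k y 0 = ((y 0)^2 - 2 * y 1 * y 3) * Real.exp (y 0 / y 1) := by simp [G]

lemma G_one (y : Fin (2*k+6) → ℝ) : G k y 1 = y 1 := by
  simp [G, ne10 k, ne13 k]

lemma G_three (y : Fin (2*k+6) → ℝ) : G k y 3 = y 0 := by
  simp [G, ne30 k]

lemma GF (x : Fin (2*k+6) → ℝ) (hx : x 1 ≠ 0) : G k (F k x) = x := by
  funext i
  rcases eq_or_ne i 0 with rfl | h0
  · rw [G_zero, F_zero, F_one, F_three, neg_div, Real.exp_neg]
    have hu : Real.exp (x 3 / x 1) ≠ 0 := Real.exp_ne_zero _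
    field_simp
    try ring
  rcases eq_or_ne i 3 with rfl | h3
  · rw [G_three, F_zero]
  · simp only [G, F, if_neg h0, if_neg h3]

lemma FG (y : Fin (2*k+6) → ℝ) (hy : y 1 ≠ 0) : F k (G k y) = y := by
  funext i
  rcases eq_or_ne i 0 with rfl | h0
  · rw [F_zero, G_three]
  rcases eq_or_ne i 3 with rfl | h3
  · rw [F_three, G_zero, G_one, G_three, neg_div, Real.exp_neg]
    have hu : Real.exp (y 0 / y 1) ≠ 0 := Real.exp_ne_zero _
    field_simp
    try ring
  · simp only [F, G, if_neg h0, if_neg h3]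

/-- The homeomorphism of `V`. -/
noncomputable def H (k : ℕ) :
    ({x : Fin (2*k+6) → ℝ | x 1 ≠ 0} : Set _) ≃ₜ
      ({x : Fin (2*k+6) → ℝ | x 1 ≠ 0} : Set _) where
  toFun x := ⟨F k x.1, by show F k x.1 1 ≠ 0; rw [F_one]; exact x.2⟩
  invFun y := ⟨G k y.1, by show G k y.1 1 ≠ 0; rw [G_one]; exact y.2⟩
  left_inv x := Subtype.ext (GF x.1 x.2)
  right_inv y := Subtype.ext (FG y.1 y.2)
  continuous_toFun := by
    apply Continuous.subtype_mk
    apply continuous_pi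
    intro i
    have c0 : Continuous fun x : {x : Fin (2*k+6) → ℝ | x 1 ≠ 0} => x.1 0 :=
      (continuous_apply _).comp continuous_subtype_val
    have c1 : Continuous fun x : {x : Fin (2*k+6) → ℝ | x 1 ≠ 0} => x.1 1 :=
      (continuous_apply _).comp continuous_subtype_val
    have c3 : Continuous fun x : {x : Fin (2*k+6) → ℝ | x 1 ≠ 0} => x.1 3 :=
      (continuous_apply _).comp continuous_subtype_val
    have h1 : ∀ x : {x : Fin (2*k+6) → ℝ | x 1 ≠ 0}, x.1 1 ≠ 0 := fun x => x.2
    rcases eq_or_ne i 0 with rfl | h0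
    · simpa only [F, if_pos rfl, if_true] using c3
    rcases eq_or_ne i 3 with rfl | h3
    · simp only [F, if_neg h0, if_pos rfl]
      exact ((c3.pow 2).sub
        (c0.mul (Real.continuous_exp.comp (c3.neg.div c1 h1)))).div
        (continuous_const.mul c1) (fun x => mul_ne_zero two_ne_zero (h1 x))
    · simp only [F, if_neg h0, if_neg h3]
      exact (continuous_apply _).comp continuous_subtype_val
  continuous_invFun := by
    apply Continuous.subtype_mk
    apply continuous_pi
    intro i
    have c0 : Continuous fun x : {x : Fin (2*k+6) → ℝ | x 1 ≠ 0} => x.1 0 :=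
      (continuous_apply _).comp continuous_subtype_val
    have c1 : Continuous fun x : {x : Fin (2*k+6) → ℝ | x 1 ≠ 0} => x.1 1 :=
      (continuous_apply _).comp continuous_subtype_val
    have c3 : Continuous fun x : {x : Fin (2*k+6) → ℝ | x 1 ≠ 0} => x.1 3 :=
      (continuous_apply _).comp continuous_subtype_val
    have h1 : ∀ x : {x : Fin (2*k+6) → ℝ | x 1 ≠ 0}, x.1 1 ≠ 0 := fun x => x.2
    rcases eq_or_ne i 0 with rfl | h0
    · simp only [G, if_pos rfl]
      exact ((c0.pow 2).sub ((continuous_const.mul c1).mul c3)).mul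
        (Real.continuous_exp.comp (c0.div c1 h1))
    rcases eq_or_ne i 3 with rfl | h3
    · simpa only [G, if_neg h0, if_pos rfl, if_true] using c0
    · simp only [G, if_neg h0, if_neg h3]
      exact (continuous_apply _).comp continuous_subtype_val

end Stmt18Aux

open Stmt18Aux in
/-- there is a homeomorphism `h : V → V` of `V = {x ∈ ℝ^{6+2k} : x2 ≠ 0}`
sending each leaf `L¹_{c1,c2} = {x ∈ V : x2 = c2, x1·e^{−x4/x2} = c1}` onto a leaf
`L²_{c1',c2'} = {x ∈ V : x2 = c2', x1² − 2x2x4 = c1'}`, with every `L²_{c1',c2'}` arising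
as such an image: the two maximal-dimensional coadjoint-orbit foliations of `G_{6+2k,1}`
and `G_{6+2k,2}` are topologically equivalent. -/
theorem stmt_18 (k : ℕ) (V : Set (Fin (2*k+6) → ℝ)) (hV : V = { x | x 1 ≠ 0 })
    (L1 L2 : ℝ → ℝ → Set (Fin (2*k+6) → ℝ))
    (hL1 : ∀ c1 c2 : ℝ, L1 c1 c2 =
      { x ∈ V | x 1 = c2 ∧ x 0 * Real.exp (-(x 3) / x 1) = c1 })
    (hL2 : ∀ c1 c2 : ℝ, L2 c1 c2 =
      { x ∈ V | x 1 = c2 ∧ (x 0)^2 - 2 * x 1 * x 3 = c1 }) :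
    ∃ h : ↥V ≃ₜ ↥V,
      (∀ c1 c2 : ℝ, c2 ≠ 0 → ∃ c1' c2' : ℝ, c2' ≠ 0 ∧
        Subtype.val '' (⇑h '' (Subtype.val ⁻¹' L1 c1 c2)) = L2 c1' c2') ∧
      (∀ c1' c2' : ℝ, c2' ≠ 0 → ∃ c1 c2 : ℝ, c2 ≠ 0 ∧
        Subtype.val '' (⇑h '' (Subtype.val ⁻¹' L1 c1 c2)) = L2 c1' c2') := by
  subst hV
  have key : ∀ c1 c2 : ℝ, c2 ≠ 0 →
      Subtype.val '' (⇑(H k) '' (Subtype.val ⁻¹' L1 c1 c2)) = L2 c1 c2 := by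
    intro c1 c2 hc2
    rw [hL1, hL2]
    ext y
    constructor
    · rintro ⟨v, ⟨x, hx, rfl⟩, rfl⟩
      obtain ⟨hxV, hx1, hx0⟩ : x.1 ∈ {x : Fin (2*k+6) → ℝ | x 1 ≠ 0} ∧
          x.1 1 = c2 ∧ x.1 0 * Real.exp (-(x.1 3) / x.1 1) = c1 := hx
      refine ⟨?_, ?_, ?_⟩
      · show F k x.1 1 ≠ 0
        rw [F_one]; exact x.2
      · show F k x.1 1 = c2
        rw [F_one]; exact hx1
      · show (F k x.1 0)^2 - 2 * F k x.1 1 * F k x.1 3 = c1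
        rw [F_zero, F_one, F_three]
        have hx1ne : x.1 1 ≠ 0 := x.2
        field_simp
        rw [neg_div] at hx0
        linear_combination hx0
    · rintro ⟨hyV, hy1, hy2⟩
      have hy1ne : y 1 ≠ 0 := hyV
      have hGmem : G k y ∈ {x : Fin (2*k+6) → ℝ | x 1 ≠ 0} := by
        show G k y 1 ≠ 0; rw [G_one]; exact hy1ne
      refine ⟨(H k) ⟨G k y, hGmem⟩, ⟨⟨G k y, hGmem⟩, ?_, rfl⟩, ?_⟩
      · refine ⟨hGmem, ?_, ?_⟩
        · show G k y 1 = c2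
          rw [G_one]; exact hy1
        · show G k y 0 * Real.exp (-(G k y 3) / G k y 1) = c1
          rw [G_zero, G_one, G_three, neg_div, Real.exp_neg]
          have hu : Real.exp (y 0 / y 1) ≠ 0 := Real.exp_ne_zero _
          field_simp
          linear_combination hy2
      · show F k (G k y) = y
        exact FG y hy1ne
  exact ⟨H k, fun c1 c2 hc2 => ⟨c1, c2, hc2, key c1 c2 hc2⟩,
    fun c1' c2' hc2' => ⟨c1', c2', hc2', key c1' c2' hc2'⟩⟩
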